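/- Let ζ : Σ → 2^{SP(Δ)} be an atomic substitution (extended to sp-pomsets and languages in the canonical way). Then for all languages L, L′ ⊆ Σ* (viewed as sets of totally ordered sp-pomsets): (1) ζ(L ∩ L′) = ζ(L) ∩ ζ(L′); (2) ζ(L \ L′) = ζ(L) \ ζ(L′); (3) ζ(L) = ∅ if and only if L = ∅. -/

import Mathlib

namespace WBKA

/-- Series-parallel terms over an alphabet `A`. -/
inductive SPTerm (A : Type) : Type
  | one : SPTerm A
  | atom : A → SPTerm A
  | seq : SPTerm A → SPTerm A → SPTerm A
  | par : SPTerm A → SPTerm A → SPTerm A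

/-- The congruence generated by the series-parallel pomset axioms:
associativity of both compositions, commutativity of parallel composition,
and the empty pomset acting as unit for both. -/
inductive SPEquiv {A : Type} : SPTerm A → SPTerm A → Prop
  | refl (u : SPTerm A) : SPEquiv u u
  | symm {u v : SPTerm A} : SPEquiv u v → SPEquiv v u
  | trans {u v w : SPTerm A} : SPEquiv u v → SPEquiv v w → SPEquiv u w
  | seqCongr {u u' v v' : SPTerm A} :
      SPEquiv u u' → SPEquiv v v' → SPEquiv (u.seq v) (u'.seq v')
  | parCongr {u u' v v' : SPTerm A} :
      SPEquiv u u' → SPEquiv v v' → SPEquiv (u.par v) (u'.par v')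
  | seqAssoc (u v w : SPTerm A) : SPEquiv ((u.seq v).seq w) (u.seq (v.seq w))
  | parAssoc (u v w : SPTerm A) : SPEquiv ((u.par v).par w) (u.par (v.par w))
  | parComm (u v : SPTerm A) : SPEquiv (u.par v) (v.par u)
  | seqOneLeft (u : SPTerm A) : SPEquiv (SPTerm.one.seq u) u
  | seqOneRight (u : SPTerm A) : SPEquiv (u.seq SPTerm.one) u
  | parOne (u : SPTerm A) : SPEquiv (u.par SPTerm.one) u

instance spSetoid (A : Type) : Setoid (SPTerm A) :=
  ⟨SPEquiv, SPEquiv.refl, SPEquiv.symm, SPEquiv.trans⟩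

/-- Series-parallel pomsets over `A`, as the free algebra on the sp-pomset axioms. -/
def Pomset (A : Type) : Type := Quotient (spSetoid A)

namespace Pomset

variable {A : Type}

def mk (u : SPTerm A) : Pomset A := Quotient.mk (spSetoid A) u

/-- The empty pomset `1`. -/
def eps : Pomset A := mk SPTerm.one

/-- The primitive pomset consisting of a single event labelled `a`. -/
def atom (a : A) : Pomset A := mk (SPTerm.atom a)

/-- Sequential composition of pomsets. -/
def seq : Pomset A → Pomset A → Pomset A :=
  Quotient.lift₂ (fun u v => mk (u.seq v))
    (fun _ _ _ _ hu hv => Quotient.sound (SPEquiv.seqCongr hu hv))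

/-- Parallel composition of pomsets. -/
def par : Pomset A → Pomset A → Pomset A :=
  Quotient.lift₂ (fun u v => mk (u.par v))
    (fun _ _ _ _ hu hv => Quotient.sound (SPEquiv.parCongr hu hv))

/-- `U` is the empty pomset. -/
def IsEmptyP (U : Pomset A) : Prop := U = eps

/-- `U` is primitive: it consists of a single labelled event. -/
def Primitive (U : Pomset A) : Prop := ∃ a : A, U = atom a

/-- `U` is sequential: a sequential composition of two non-empty pomsets. -/
def Sequential (U : Pomset A) : Prop :=
  ∃ V W : Pomset A, V ≠ eps ∧ W ≠ eps ∧ U = seq V W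

/-- `U` is parallel: a parallel composition of two non-empty pomsets. -/
def Parallel (U : Pomset A) : Prop :=
  ∃ V W : Pomset A, V ≠ eps ∧ W ≠ eps ∧ U = par V W

/-- `U` is a sequential prime. -/
def SeqPrime (U : Pomset A) : Prop :=
  U ≠ eps ∧ ∀ V W : Pomset A, U = seq V W → V = eps ∨ W = eps

/-- `U` is a parallel prime. -/
def ParPrime (U : Pomset A) : Prop :=
  U ≠ eps ∧ ∀ V W : Pomset A, U = par V W → V = eps ∨ W = eps

/-- Sequential product of a list of pomsets. -/
def seqProd (l : List (Pomset A)) : Pomset A := l.foldr seq eps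

/-- Parallel product of a list of pomsets. -/
def parProd (l : List (Pomset A)) : Pomset A := l.foldr par eps

end Pomset

/-- Pointwise sequential composition of pomset languages. -/
def langSeq {A : Type} (L M : Set (Pomset A)) : Set (Pomset A) :=
  Set.image2 Pomset.seq L M

/-- Pointwise parallel composition of pomset languages. -/
def langPar {A : Type} (L M : Set (Pomset A)) : Set (Pomset A) :=
  Set.image2 Pomset.par L M

/-- `n`-fold sequential power of a language. -/
def langPow {A : Type} (L : Set (Pomset A)) : ℕ → Set (Pomset A)
  | 0 => {Pomset.eps}
  | n + 1 => langSeq L (langPow L n)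

/-- Kleene closure of a pomset language. -/
def langStar {A : Type} (L : Set (Pomset A)) : Set (Pomset A) :=
  ⋃ n : ℕ, langPow L n

/-- Series-rational expressions over `A`. -/
inductive SR (A : Type) : Type
  | zero : SR A
  | one : SR A
  | atom : A → SR A
  | plus : SR A → SR A → SR A
  | seq : SR A → SR A → SR A
  | par : SR A → SR A → SR A
  | star : SR A → SR A

/-- The sp-language semantics of series-rational expressions. -/
def sem {A : Type} : SR A → Set (Pomset A)
  | .zero => ∅
  | .one => {Pomset.eps}
  | .atom a => {Pomset.atom a}
  | .plus e f => sem e ∪ sem f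
  | .seq e f => langSeq (sem e) (sem f)
  | .par e f => langPar (sem e) (sem f)
  | .star e => langStar (sem e)

/-- The syntactic predicate `F` characterising acceptance of the empty pomset. -/
inductive EF {A : Type} : SR A → Prop
  | one : EF SR.one
  | plusLeft {e : SR A} (f : SR A) : EF e → EF (SR.plus e f)
  | plusRight (e : SR A) {f : SR A} : EF f → EF (SR.plus e f)
  | seq {e f : SR A} : EF e → EF f → EF (SR.seq e f)
  | par {e f : SR A} : EF e → EF f → EF (SR.par e f)
  | star (e : SR A) : EF (SR.star e)

/-- Pomset automata. -/
structure PA (A : Type) (Q : Type) where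
  acc : Set Q
  δ : Q → A → Set Q
  γ : Q → Multiset Q → Set Q

/-- The run relation of a pomset automaton. -/
inductive Run {A Q : Type} (M : PA A Q) : Q → Pomset A → Q → Prop
  | triv (q : Q) : Run M q Pomset.eps q
  | seqUnit {q : Q} {a : A} {q' : Q} :
      q' ∈ M.δ q a → Run M q (Pomset.atom a) q'
  | comp {q : Q} {U : Pomset A} {q'' : Q} {V : Pomset A} {q' : Q} :
      Run M q U q'' → Run M q'' V q' → Run M q (U.seq V) q'
  | parUnit {q q' : Q} (l : List (Q × Pomset A × Q)) :
      q' ∈ M.γ q (↑(l.map Prod.fst) : Multiset Q) →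
      (∀ x ∈ l, x.2.2 ∈ M.acc) →
      (∀ x ∈ l, Run M x.1 x.2.1 x.2.2) →
      Run M q (Pomset.parProd (l.map fun x => x.2.1)) q'

/-- Language of a state of a pomset automaton. -/
def PA.lang {A Q : Type} (M : PA A Q) (q : Q) : Set (Pomset A) :=
  {U | ∃ q' ∈ M.acc, Run M q U q'}

/-- The triple `q →^U q'` matches the trivial-run rule. -/
def TrivialRun {A Q : Type} (_M : PA A Q) (q : Q) (U : Pomset A) (q' : Q) : Prop :=
  U = Pomset.eps ∧ q = q'

/-- `q →^U q'` is a sequential unit run. -/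
def SeqUnitRun {A Q : Type} (M : PA A Q) (q : Q) (U : Pomset A) (q' : Q) : Prop :=
  ∃ a : A, U = Pomset.atom a ∧ q' ∈ M.δ q a

/-- `q →^U q'` is a parallel unit run. -/
def ParUnitRun {A Q : Type} (M : PA A Q) (q : Q) (U : Pomset A) (q' : Q) : Prop :=
  ∃ l : List (Q × Pomset A × Q),
    q' ∈ M.γ q (↑(l.map Prod.fst) : Multiset Q) ∧
    (∀ x ∈ l, x.2.2 ∈ M.acc ∧ Run M x.1 x.2.1 x.2.2) ∧
    U = Pomset.parProd (l.map fun x => x.2.1)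

/-- `q →^U q'` is a unit run: a sequential or a parallel unit run. -/
def UnitRun {A Q : Type} (M : PA A Q) (q : Q) (U : Pomset A) (q' : Q) : Prop :=
  SeqUnitRun M q U q' ∨ ParUnitRun M q U q'

/-- `q →^U q'` is a composite run: a sequential composition of two non-trivial runs. -/
def CompositeRun {A Q : Type} (M : PA A Q) (q : Q) (U : Pomset A) (q' : Q) : Prop :=
  ∃ (V W : Pomset A) (q'' : Q),
    U = V.seq W ∧ Run M q V q'' ∧ Run M q'' W q' ∧
    ¬ TrivialRun M q V q'' ∧ ¬ TrivialRun M q'' W q'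

/-- The support preorder: `Supports M q' q` means `q' ⪯ q`. -/
inductive Supports {A Q : Type} (M : PA A Q) : Q → Q → Prop
  | refl (q : Q) : Supports M q q
  | trans {q r p : Q} : Supports M q r → Supports M r p → Supports M q p
  | deltaStep {q : Q} {a : A} {q' : Q} : q' ∈ M.δ q a → Supports M q' q
  | gammaStep {q : Q} {φ : Multiset Q} {q' : Q} : q' ∈ M.γ q φ → Supports M q' q
  | forkStep {q : Q} {φ : Multiset Q} {r : Q} :
      r ∈ φ → (M.γ q φ).Nonempty → Supports M r q

/-- A pomset automaton is fork-acyclic when every fork target `r` of `q`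
satisfies `r ≺ q`, i.e. `q ⋠ r`. -/
def ForkAcyclic {A Q : Type} (M : PA A Q) : Prop :=
  ∀ (q : Q) (φ : Multiset Q) (r : Q),
    r ∈ φ → (M.γ q φ).Nonempty → ¬ Supports M q r

/-- A set of states is support-closed. -/
def SupportClosed {A Q : Type} (M : PA A Q) (S : Set Q) : Prop :=
  ∀ q ∈ S, ∀ q' : Q, Supports M q' q → q' ∈ S

/-- Restriction of a pomset automaton to a set of states. -/
def PA.restrict {A Q : Type} (M : PA A Q) (S : Set Q) : PA A {q : Q // q ∈ S} where
  acc := {q | q.val ∈ M.acc}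
  δ := fun q a => {r | r.val ∈ M.δ q.val a}
  γ := fun q φ => {r | r.val ∈ M.γ q.val (φ.map Subtype.val)}

/-- `n`-forking automata. -/
def NForking {A Q : Type} (M : PA A Q) (n : ℕ) : Prop :=
  ∀ (q : Q) (φ : Multiset Q), (M.γ q φ).Nonempty → n ≤ Multiset.card φ

/-- Parsimonious automata: no fork target accepts the empty pomset. -/
def Parsimonious {A Q : Type} (M : PA A Q) : Prop :=
  ∀ (p : Q) (φ : Multiset Q) (q : Q),
    q ∈ φ → (M.γ p φ).Nonempty → Pomset.eps ∉ M.lang q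

/-- Flat-branching automata: forks from fork targets never reach accepting states. -/
def FlatBranching {A Q : Type} (M : PA A Q) : Prop :=
  ∀ (p : Q) (φ : Multiset Q) (q : Q),
    q ∈ φ → (M.γ p φ).Nonempty → ∀ ψ : Multiset Q, M.γ q ψ ∩ M.acc = ∅

/-- Well-structured pomset automata. -/
def WellStructured {A Q : Type} (M : PA A Q) : Prop :=
  (∀ (q : Q) (φ : Multiset Q), (M.γ q φ).Nonempty → 2 ≤ Multiset.card φ) ∧
  ∀ (p : Q) (φ : Multiset Q) (q : Q), q ∈ φ → (M.γ p φ).Nonempty →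
    q ∉ M.acc ∧ ∀ ψ : Multiset Q, M.γ q ψ ∩ M.acc = ∅

/-- The relation `⇝` characterising runs labelled by the empty pomset. -/
inductive Leadsto {A Q : Type} (M : PA A Q) : Q → Q → Prop
  | refl (p : Q) : Leadsto M p p
  | trans {p r q : Q} : Leadsto M p r → Leadsto M r q → Leadsto M p q
  | fork {p q : Q} (l : List (Q × Q)) :
      q ∈ M.γ p (↑(l.map Prod.fst) : Multiset Q) →
      (∀ x ∈ l, x.2 ∈ M.acc) →
      (∀ x ∈ l, Leadsto M x.1 x.2) →
      Leadsto M p q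

/-- Concatenate each expression of a set with `f` on the right. -/
def seqAfter {A : Type} (T : Set (SR A)) (f : SR A) : Set (SR A) :=
  (fun g => SR.seq g f) '' T

/-- Antimirov-style sequential derivatives of sr-expressions. -/
def deltaS {A : Type} : SR A → A → Set (SR A)
  | .zero, _ => ∅
  | .one, _ => ∅
  | .atom b, a => {g | g = SR.one ∧ a = b}
  | .plus e f, a => deltaS e a ∪ deltaS f a
  | .seq e f, a => seqAfter (deltaS e a) f ∪ {g | g ∈ deltaS f a ∧ EF e}
  | .par _ _, _ => ∅
  | .star e, a => seqAfter (deltaS e a) (SR.star e)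

/-- Antimirov-style parallel derivatives of sr-expressions. -/
def gammaS {A : Type} : SR A → Multiset (SR A) → Set (SR A)
  | .zero, _ => ∅
  | .one, _ => ∅
  | .atom _, _ => ∅
  | .plus e f, φ => gammaS e φ ∪ gammaS f φ
  | .seq e f, φ => seqAfter (gammaS e φ) f ∪ {g | g ∈ gammaS f φ ∧ EF e}
  | .par e f, φ => {g | g = SR.one ∧ φ = {e, f}}
  | .star e, φ => seqAfter (gammaS e φ) (SR.star e)

/-- The syntactic pomset automaton on sr-expressions. -/
def synPA (A : Type) : PA A (SR A) where
  acc := {e | EF e}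
  δ := deltaS
  γ := gammaS

/-- The parallel-nesting depth of an sr-expression. -/
def pdepth {A : Type} : SR A → ℕ
  | .zero => 0
  | .one => 0
  | .atom _ => 0
  | .plus e f => max (pdepth e) (pdepth f)
  | .seq e f => max (pdepth e) (pdepth f)
  | .par e f => max (pdepth e) (pdepth f) + 1
  | .star e => pdepth e

/-- A substitution `ζ : Σ → 2^{SP(Δ)}` is atomic. -/
def Atomic {A B : Type} (ζ : A → Set (Pomset B)) : Prop :=
  (∀ a : A, ∀ U ∈ ζ a, Pomset.SeqPrime U) ∧
  (∀ a b : A, (ζ a ∩ ζ b).Nonempty ↔ a = b)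

/-- Extension of a substitution to words. -/
def substWord {A B : Type} (ζ : A → Set (Pomset B)) : List A → Set (Pomset B)
  | [] => {Pomset.eps}
  | a :: w => langSeq (ζ a) (substWord ζ w)

/-- Extension of a substitution to word languages. -/
def substLang {A B : Type} (ζ : A → Set (Pomset B)) (L : Set (List A)) :
    Set (Pomset B) :=
  ⋃ w ∈ L, substWord ζ w

/-- `L_A(α)` for a set `α` of states: the atom language of `α`. -/
def atomLang {Q U : Type} (LA : Q → Set U) (α : Set Q) : Set U :=
  (⋂ q ∈ α, LA q) \ (⋃ (q : Q) (_ : q ∉ α), LA q)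


/-! ### Auxiliary development: normal-form invariants for sp-pomsets -/

section Aux

variable {A : Type}

/-- Number of atoms of a term. -/
def tsize : SPTerm A → ℕ
  | .one => 0
  | .atom _ => 1
  | .seq u v => tsize u + tsize v
  | .par u v => tsize u + tsize v

lemma tsize_respects {u v : SPTerm A} (h : SPEquiv u v) : tsize u = tsize v := by
  induction h <;> simp -failIfUnchanged [tsize] at * <;> omega

lemma tsize_zero_equiv : ∀ {u : SPTerm A}, tsize u = 0 → SPEquiv u .one
  | .one, _ => SPEquiv.refl _
  | .seq u v, h => by
    simp [tsize] at h
    exact (SPEquiv.seqCongr (tsize_zero_equiv h.1) (tsize_zero_equiv h.2)).trans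
      (SPEquiv.seqOneLeft _)
  | .par u v, h => by
    simp [tsize] at h
    exact (SPEquiv.parCongr (tsize_zero_equiv h.1) (tsize_zero_equiv h.2)).trans
      (SPEquiv.parOne _)

/-- Number of sequential prime factors of a term. -/
def tlen : SPTerm A → ℕ
  | .one => 0
  | .atom _ => 1
  | .seq u v => tlen u + tlen v
  | .par u v => if tsize u = 0 then tlen v else if tsize v = 0 then tlen u else 1

lemma tsize_zero_tlen : ∀ {u : SPTerm A}, tsize u = 0 → tlen u = 0
  | .one, _ => rfl
  | .atom _, h => by simp [tsize] at h
  | .seq u v, h => by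
    simp [tsize] at h
    simp [tlen, tsize_zero_tlen h.1, tsize_zero_tlen h.2]
  | .par u v, h => by
    simp [tsize] at h
    simp [tlen, h.1, tsize_zero_tlen h.2]

lemma tlen_respects {u v : SPTerm A} (h : SPEquiv u v) : tlen u = tlen v := by
  induction h with
  | refl => rfl
  | symm _ ih => omega
  | trans _ _ ih₁ ih₂ => omega
  | seqCongr _ _ ih₁ ih₂ => simp [tlen]; omega
  | parCongr h₁ h₂ ih₁ ih₂ =>
    simp [tlen, tsize_respects h₁, tsize_respects h₂, ih₁, ih₂]
  | seqAssoc u v w => simp [tlen]; omega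
  | parAssoc u v w =>
    simp only [tlen, tsize]
    by_cases hu : tsize u = 0 <;> by_cases hv : tsize v = 0 <;>
      by_cases hw : tsize w = 0 <;>
      simp_all [Nat.add_eq_zero, tsize_zero_tlen]
  | parComm u v =>
    simp only [tlen]
    by_cases hu : tsize u = 0 <;> by_cases hv : tsize v = 0 <;>
      simp_all [tsize_zero_tlen]
  | seqOneLeft u => simp [tlen]
  | seqOneRight u => simp [tlen]
  | parOne u =>
    simp only [tlen, tsize]
    split_ifs with h
    · simp [tsize_zero_tlen h]
    · rfl

lemma tlen_zero_equiv : ∀ {u : SPTerm A}, tlen u = 0 → SPEquiv u .one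
  | .one, _ => SPEquiv.refl _
  | .atom _, h => by simp [tlen] at h
  | .seq u v, h => by
    simp [tlen] at h
    exact (SPEquiv.seqCongr (tlen_zero_equiv h.1) (tlen_zero_equiv h.2)).trans
      (SPEquiv.seqOneLeft _)
  | .par u v, h => by
    simp only [tlen] at h
    split_ifs at h with h1 h2
    · exact (SPEquiv.parCongr (tsize_zero_equiv h1) (tlen_zero_equiv h)).trans
        ((SPEquiv.parComm _ _).trans (SPEquiv.parOne _))
    · exact (SPEquiv.parCongr (tlen_zero_equiv h) (tsize_zero_equiv h2)).trans
        (SPEquiv.parOne _)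

/-- Atom count on pomsets. -/
def sizeP : Pomset A → ℕ :=
  Quotient.lift tsize fun _ _ h => tsize_respects h

/-- Length of the sequential prime factorisation. -/
def lenP : Pomset A → ℕ :=
  Quotient.lift tlen fun _ _ h => tlen_respects h

lemma mk_eq_eps_iff {u : SPTerm A} : Pomset.mk u = Pomset.eps ↔ tsize u = 0 := by
  constructor
  · intro h
    have := Quotient.exact (s := spSetoid A) h
    exact tsize_respects this
  · intro h
    exact Quotient.sound (tsize_zero_equiv h)

lemma lenP_seq (U V : Pomset A) : lenP (U.seq V) = lenP U + lenP V := by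
  induction U using Quotient.ind
  induction V using Quotient.ind
  rfl

lemma lenP_zero_iff {U : Pomset A} : lenP U = 0 ↔ U = Pomset.eps := by
  induction U using Quotient.ind with
  | _ u =>
    constructor
    · intro h; exact Quotient.sound (tlen_zero_equiv h)
    · intro h
      have := Quotient.exact (s := spSetoid A) h
      exact tlen_respects this

lemma seqPrime_of_lenP_one {U : Pomset A} (h : lenP U = 1) : U.SeqPrime := by
  constructor
  · intro he; rw [he] at h; exact absurd h (by simp [lenP, Pomset.eps, Pomset.mk, tlen])
  · intro V W hVW
    rw [hVW, lenP_seq] at h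
    rcases Nat.eq_zero_or_pos (lenP V) with hV | hV
    · exact Or.inl (lenP_zero_iff.mp hV)
    · exact Or.inr (lenP_zero_iff.mp (by omega))

lemma seqP_mk (u v : SPTerm A) : (Pomset.mk u).seq (Pomset.mk v) = Pomset.mk (u.seq v) := rfl

lemma seqP_assoc (U V W : Pomset A) : (U.seq V).seq W = U.seq (V.seq W) := by
  induction U using Quotient.ind
  induction V using Quotient.ind
  induction W using Quotient.ind
  exact Quotient.sound (SPEquiv.seqAssoc _ _ _)

lemma seqP_eps_left (U : Pomset A) : Pomset.eps.seq U = U := by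
  induction U using Quotient.ind
  exact Quotient.sound (SPEquiv.seqOneLeft _)

lemma seqP_eps_right (U : Pomset A) : U.seq Pomset.eps = U := by
  induction U using Quotient.ind
  exact Quotient.sound (SPEquiv.seqOneRight _)

/-- First sequential-prime factor and the remainder. -/
def thd : SPTerm A → Option (Pomset A × Pomset A)
  | .one => none
  | .atom a => some (Pomset.atom a, Pomset.eps)
  | .seq u v =>
    match thd u with
    | none => thd v
    | some (p, r) => some (p, r.seq (Pomset.mk v))
  | .par u v =>
    if tsize u = 0 then thd v
    else if tsize v = 0 then thd u
    else some (Pomset.mk (SPTerm.par u v), Pomset.eps)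

lemma thd_none_of_tsize_zero : ∀ {u : SPTerm A}, tsize u = 0 → thd u = none
  | .one, _ => rfl
  | .atom _, h => by simp [tsize] at h
  | .seq u v, h => by
    simp [tsize] at h
    simp [thd, thd_none_of_tsize_zero h.1, thd_none_of_tsize_zero h.2]
  | .par u v, h => by
    simp [tsize] at h
    simp [thd, h.1, thd_none_of_tsize_zero h.2]

lemma mk_par_left_eps {u : SPTerm A} (v : SPTerm A) (h : tsize u = 0) :
    Pomset.mk (SPTerm.par u v) = Pomset.mk v := by
  refine Quotient.sound ?_
  exact ((SPEquiv.parCongr (tsize_zero_equiv h) (SPEquiv.refl v)).trans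
    (SPEquiv.parComm _ _)).trans (SPEquiv.parOne _)

lemma mk_par_right_eps (u : SPTerm A) {v : SPTerm A} (h : tsize v = 0) :
    Pomset.mk (SPTerm.par u v) = Pomset.mk u := by
  refine Quotient.sound ?_
  exact (SPEquiv.parCongr (SPEquiv.refl u) (tsize_zero_equiv h)).trans (SPEquiv.parOne _)

lemma thd_respects {u v : SPTerm A} (h : SPEquiv u v) : thd u = thd v := by
  induction h with
  | refl => rfl
  | symm _ ih => exact ih.symm
  | trans _ _ ih₁ ih₂ => exact ih₁.trans ih₂
  | seqCongr h₁ h₂ ih₁ ih₂ =>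
    rename_i u₁ u₁' v₁ v₁'
    have hv : Pomset.mk v₁ = Pomset.mk v₁' := Quotient.sound h₂
    simp only [thd, ih₁, ih₂, hv]
  | parCongr h₁ h₂ ih₁ ih₂ =>
    rename_i u₁ u₁' v₁ v₁'
    have hp : Pomset.mk (u₁.par v₁) = Pomset.mk (u₁'.par v₁') :=
      Quotient.sound (SPEquiv.parCongr h₁ h₂)
    simp only [thd, ih₁, ih₂, tsize_respects h₁, tsize_respects h₂, hp]
  | seqAssoc u v w =>
    simp only [thd]
    cases hu : thd u with
    | none =>
      cases hv : thd v with
      | none => rfl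
      | some pr => cases pr; simp [← seqP_mk]
    | some pr => cases pr; simp [← seqP_mk, seqP_assoc]
  | parAssoc u v w =>
    have hsound : Pomset.mk ((u.par v).par w) = Pomset.mk (u.par (v.par w)) :=
      Quotient.sound (SPEquiv.parAssoc u v w)
    simp only [thd, tsize]
    by_cases hu : tsize u = 0 <;> by_cases hv : tsize v = 0 <;>
      by_cases hw : tsize w = 0 <;>
      simp_all [Nat.add_eq_zero, thd_none_of_tsize_zero,
        mk_par_left_eps, mk_par_right_eps]
  | parComm u v =>
    have hsound : Pomset.mk (u.par v) = Pomset.mk (v.par u) :=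
      Quotient.sound (SPEquiv.parComm u v)
    simp only [thd]
    by_cases hu : tsize u = 0 <;> by_cases hv : tsize v = 0 <;>
      simp_all [thd_none_of_tsize_zero]
  | seqOneLeft u => simp [thd]
  | seqOneRight u =>
    simp only [thd]
    cases hu : thd u with
    | none => rfl
    | some pr =>
      cases pr
      have : Pomset.mk (A := A) SPTerm.one = Pomset.eps := rfl
      simp [this, seqP_eps_right]
  | parOne u =>
    simp only [thd, tsize]
    split_ifs with h
    · simp [thd_none_of_tsize_zero h]
    · rfl

/-- First sequential-prime factor and remainder, on pomsets. -/
def hdP : Pomset A → Option (Pomset A × Pomset A) :=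
  Quotient.lift thd fun _ _ h => thd_respects h

lemma thd_none_tsize : ∀ {u : SPTerm A}, thd u = none → tsize u = 0
  | .one, _ => rfl
  | .atom _, h => by simp [thd] at h
  | .seq u v, h => by
    simp only [thd] at h
    cases hu : thd u with
    | none =>
      rw [hu] at h
      simp [tsize, thd_none_tsize hu, thd_none_tsize h]
    | some pr => obtain ⟨p, r⟩ := pr; rw [hu] at h; simp at h
  | .par u v, h => by
    simp only [thd] at h
    split_ifs at h with h1 h2
    · simp [tsize, h1, thd_none_tsize h]
    · simp [tsize, h2, thd_none_tsize h]

lemma hdP_none_iff {U : Pomset A} : hdP U = none ↔ U = Pomset.eps := by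
  induction U using Quotient.ind with
  | _ u =>
    rw [show (Quotient.mk _ u : Pomset A) = Pomset.mk u from rfl, mk_eq_eps_iff]
    show thd u = none ↔ tsize u = 0
    exact ⟨thd_none_tsize, thd_none_of_tsize_zero⟩

lemma hdP_decomp : ∀ {u : SPTerm A} {p r : Pomset A}, thd u = some (p, r) →
    Pomset.mk u = p.seq r ∧ p.SeqPrime := by
  intro u
  induction u with
  | one => intro p r h; simp [thd] at h
  | atom a =>
    intro p r h
    simp only [thd, Option.some.injEq, Prod.mk.injEq] at h
    obtain ⟨hp, hr⟩ := h
    subst hp; subst hr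
    constructor
    · rw [seqP_eps_right]; rfl
    · exact seqPrime_of_lenP_one rfl
  | seq u v ihu ihv =>
    intro p r h
    simp only [thd] at h
    cases hu : thd u with
    | none =>
      rw [hu] at h
      obtain ⟨h1, h2⟩ := ihv h
      have hueps : Pomset.mk u = Pomset.eps := by
        rw [mk_eq_eps_iff]; exact thd_none_tsize hu
      refine ⟨?_, h2⟩
      rw [← seqP_mk, hueps, seqP_eps_left, h1]
    | some pr =>
      obtain ⟨p', r'⟩ := pr
      rw [hu] at h
      simp only [Option.some.injEq, Prod.mk.injEq] at h
      obtain ⟨hp, hr⟩ := h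
      obtain ⟨h1, h2⟩ := ihu hu
      subst hp; subst hr
      refine ⟨?_, h2⟩
      rw [← seqP_mk, h1, seqP_assoc]
  | par u v ihu ihv =>
    intro p r h
    simp only [thd] at h
    split_ifs at h with h1 h2
    · obtain ⟨hh1, hh2⟩ := ihv h
      exact ⟨by rw [mk_par_left_eps v h1, hh1], hh2⟩
    · obtain ⟨hh1, hh2⟩ := ihu h
      exact ⟨by rw [mk_par_right_eps u h2, hh1], hh2⟩
    · simp only [Option.some.injEq, Prod.mk.injEq] at h
      obtain ⟨hp, hr⟩ := h
      subst hp; subst hr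
      refine ⟨(seqP_eps_right _).symm, seqPrime_of_lenP_one ?_⟩
      show tlen (SPTerm.par u v) = 1
      simp [tlen, h1, h2]

lemma hdP_decomp' {U p r : Pomset A} (h : hdP U = some (p, r)) :
    U = p.seq r ∧ p.SeqPrime := by
  induction U using Quotient.ind
  exact hdP_decomp h

lemma hdP_seq (U V : Pomset A) :
    hdP (U.seq V) = match hdP U with
      | none => hdP V
      | some (p, r) => some (p, r.seq V) := by
  induction U using Quotient.ind
  induction V using Quotient.ind
  rfl

lemma hdP_of_seqPrime {U : Pomset A} (h : U.SeqPrime) :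
    hdP U = some (U, Pomset.eps) := by
  cases hU : hdP U with
  | none => exact absurd (hdP_none_iff.mp hU) h.1
  | some pr =>
    obtain ⟨p, r⟩ := pr
    obtain ⟨h1, h2⟩ := hdP_decomp' hU
    rcases h.2 p r h1 with hp | hr
    · exact absurd hp h2.1
    · subst hr
      rw [seqP_eps_right] at h1
      rw [h1]

lemma seqPrime_cancel {V V' W W' : Pomset A} (hV : V.SeqPrime) (hV' : V'.SeqPrime)
    (h : V.seq W = V'.seq W') : V = V' ∧ W = W' := by
  have h1 : hdP (V.seq W) = some (V, W) := by
    rw [hdP_seq, hdP_of_seqPrime hV]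
    simp [seqP_eps_left]
  have h2 : hdP (V'.seq W') = some (V', W') := by
    rw [hdP_seq, hdP_of_seqPrime hV']
    simp [seqP_eps_left]
  rw [h, h2] at h1
  exact ⟨(Prod.mk.injEq _ _ _ _ ▸ Option.some.inj h1.symm).1,
    (Prod.mk.injEq _ _ _ _ ▸ Option.some.inj h1.symm).2⟩

lemma seq_ne_eps {V W : Pomset A} (hV : V.SeqPrime) : V.seq W ≠ Pomset.eps := by
  intro h
  have := hdP_none_iff.mpr h
  rw [hdP_seq, hdP_of_seqPrime hV] at this
  simp at this

end Aux

section SubstAux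

variable {A B : Type}

lemma zeta_nonempty {ζ : A → Set (Pomset B)} (hζ : Atomic ζ) (a : A) :
    (ζ a).Nonempty := by
  obtain ⟨U, hU, -⟩ := (hζ.2 a a).mpr rfl
  exact ⟨U, hU⟩

lemma substWord_nonempty {ζ : A → Set (Pomset B)} (hζ : Atomic ζ) (w : List A) :
    (substWord ζ w).Nonempty := by
  induction w with
  | nil => exact ⟨Pomset.eps, rfl⟩
  | cons a w ih =>
    obtain ⟨V, hV⟩ := zeta_nonempty hζ a
    obtain ⟨W, hW⟩ := ih
    exact ⟨V.seq W, Set.mem_image2_of_mem hV hW⟩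

lemma substWord_inj {ζ : A → Set (Pomset B)} (hζ : Atomic ζ) :
    ∀ {w w' : List A} {U : Pomset B},
      U ∈ substWord ζ w → U ∈ substWord ζ w' → w = w' := by
  intro w
  induction w with
  | nil =>
    intro w' U hw hw'
    cases w' with
    | nil => rfl
    | cons b v' =>
      obtain ⟨V, hV, W, hW, hVW⟩ := hw'
      have hU : U = Pomset.eps := hw
      exact absurd (hVW.trans hU) (seq_ne_eps (hζ.1 b V hV))
  | cons a v ih =>
    intro w' U hw hw'
    cases w' with
    | nil =>
      obtain ⟨V, hV, W, hW, hVW⟩ := hw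
      have hU : U = Pomset.eps := hw'
      exact absurd (hVW.trans hU) (seq_ne_eps (hζ.1 a V hV))
    | cons b v' =>
      obtain ⟨V, hV, W, hW, hVW⟩ := hw
      obtain ⟨V', hV', W', hW', hVW'⟩ := hw'
      have heq : V.seq W = V'.seq W' := hVW.trans hVW'.symm
      obtain ⟨hVV, hWW⟩ := seqPrime_cancel (hζ.1 a V hV) (hζ.1 b V' hV') heq
      have hab : a = b := (hζ.2 a b).mp ⟨V, hV, hVV ▸ hV'⟩
      have hv : v = v' := ih hW (hWW ▸ hW')
      rw [hab, hv]

end SubstAux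

/-- Atomic substitutions preserve intersection and difference of word
languages, and reflect emptiness. -/
theorem atomic_substitution_properties {A B : Type} (ζ : A → Set (Pomset B))
    (hζ : Atomic ζ) (L L' : Set (List A)) :
    substLang ζ (L ∩ L') = substLang ζ L ∩ substLang ζ L' ∧
    substLang ζ (L \ L') = substLang ζ L \ substLang ζ L' ∧
    (substLang ζ L = ∅ ↔ L = ∅) := by
  refine ⟨?_, ?_, ?_⟩
  · ext U
    simp only [substLang, Set.mem_iUnion₂, Set.mem_inter_iff]
    constructor
    · rintro ⟨w, ⟨hwL, hwL'⟩, hU⟩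
      exact ⟨⟨w, hwL, hU⟩, ⟨w, hwL', hU⟩⟩
    · rintro ⟨⟨w, hwL, hU⟩, ⟨w', hwL', hU'⟩⟩
      have := substWord_inj hζ hU hU'
      subst this
      exact ⟨w, ⟨hwL, hwL'⟩, hU⟩
  · ext U
    simp only [substLang, Set.mem_iUnion₂, Set.mem_diff]
    constructor
    · rintro ⟨w, ⟨hwL, hwn⟩, hU⟩
      refine ⟨⟨w, hwL, hU⟩, ?_⟩
      rintro ⟨w', hw2, hU'⟩
      have := substWord_inj hζ hU hU'
      subst this
      exact hwn hw2
    · rintro ⟨⟨w, hwL, hU⟩, hn⟩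
      exact ⟨w, ⟨hwL, fun hwL' => hn ⟨w, hwL', hU⟩⟩, hU⟩
  · constructor
    · intro h
      by_contra hL
      obtain ⟨w, hw⟩ := Set.nonempty_iff_ne_empty.mpr hL
      obtain ⟨U, hU⟩ := substWord_nonempty hζ w
      have : U ∈ substLang ζ L := Set.mem_iUnion₂.mpr ⟨w, hw, hU⟩
      rw [h] at this
      exact this
    · intro h
      rw [h]
      simp [substLang]

end WBKA
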